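/- arXiv:1404.4560 — 5 statements merged into one kernel-verified Lean document; each statement's English description precedes it below -/
import Mathlib

section
/- Let α and α' be two length-m scoring vectors over the rationals. If there exist rationals a > 0 and b such that α'_i = a·α_i + b for every i ∈ {1,…,m}, then for every multiset of votes (linear orders over m candidates), the set of candidates with maximal total score under α equals the set of candidates with maximal total score under α'. -/
/-- A vote over m candidates is a bijection from positions to candidates (both `Fin m`);
the candidate in position i receives `α i` points. -/
def score {m : ℕ} (α : Fin m → ℚ) (V : Multiset (Equiv.Perm (Fin m))) (c : Fin m) : ℚ :=
  (V.map fun v => α (v.symm c)).sum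

/-- Winners: candidates with maximal total score. -/
def winners {m : ℕ} (α : Fin m → ℚ) (V : Multiset (Equiv.Perm (Fin m))) : Set (Fin m) :=
  {c | ∀ d, score α V d ≤ score α V c}

lemma score_affine {m : ℕ} (α α' : Fin m → ℚ) (a b : ℚ)
    (h : ∀ i, α' i = a * α i + b) (V : Multiset (Equiv.Perm (Fin m))) (c : Fin m) :
    score α' V c = a * score α V c + (V.card : ℚ) * b := by
  unfold score
  induction V using Multiset.induction with
  | empty => simp
  | cons v V ih =>
      rw [Multiset.map_cons, Multiset.map_cons, Multiset.sum_cons, Multiset.sum_cons, ih, h,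
        Multiset.card_cons]
      push_cast
      ring

/-- Positive affine transformations of a scoring vector preserve winner sets. -/
theorem stmt_1 (m : ℕ) (α α' : Fin m → ℚ) (hα : Antitone α) (hα' : Antitone α')
    (a b : ℚ) (ha : 0 < a) (h : ∀ i, α' i = a * α i + b)
    (V : Multiset (Equiv.Perm (Fin m))) :
    winners α V = winners α' V := by
  ext c
  simp only [winners, Set.mem_setOf_eq]
  constructor
  · intro hc d
    rw [score_affine α α' a b h, score_affine α α' a b h]
    have := hc d
    nlinarith
  · intro hc d
    have := hc d
    rw [score_affine α α' a b h, score_affine α α' a b h] at this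
    nlinarith
end

section
/- Let f be a pure scoring-rule generator, i.e., for each m ≥ 1, f(m) = (α^m₁,…,α^m_m) is a nonincreasing rational vector, and for each m ≥ 2 there is an index whose deletion from f(m) yields exactly f(m−1). Then for all m' ≥ m ≥ 1 and all i, j with 1 ≤ i ≤ m and 0 ≤ j ≤ m−1: α^{m'}_i ≥ α^m_i and α^{m'}_{m'−j} ≤ α^m_{m−j}. In particular, if α^m₄ > α^m_{m−2} for some m ≥ 6, then α^{m'}₄ > α^{m'}_{m'−2} for all m' ≥ m. -/
/-- A pure scoring-rule generator: each length-m vector is nonincreasing, and each length-(m+1)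
vector arises from the length-m vector by inserting one new entry (equivalently, some component
of the longer vector can be deleted to recover the shorter one). -/
def IsPureGen (f : (m : ℕ) → Fin m → ℚ) : Prop :=
  (∀ m, Antitone (f m)) ∧
  ∀ m : ℕ, 1 ≤ m → ∃ j : Fin (m + 1), ∀ i : Fin m, f m i = f (m + 1) (j.succAbove i)

lemma succAbove_val_bounds {m : ℕ} (j : Fin (m + 1)) (i : Fin m) :
    i.val ≤ (j.succAbove i).val ∧ (j.succAbove i).val ≤ i.val + 1 := by
  rw [Fin.succAbove]
  split <;> simp

lemma step_front (f : (m : ℕ) → Fin m → ℚ) (hf : IsPureGen f) (m : ℕ) (h1 : 1 ≤ m)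
    (i : Fin m) : f m i ≤ f (m + 1) ⟨i.val, by omega⟩ := by
  obtain ⟨j, hj⟩ := hf.2 m h1
  rw [hj i]
  exact hf.1 (m + 1) (show (⟨i.val, by omega⟩ : Fin (m+1)) ≤ j.succAbove i from
    (succAbove_val_bounds j i).1)

lemma step_back (f : (m : ℕ) → Fin m → ℚ) (hf : IsPureGen f) (m : ℕ) (h1 : 1 ≤ m)
    (j : ℕ) (hj : j ≤ m - 1) :
    f (m + 1) ⟨m - j, by omega⟩ ≤ f m ⟨m - 1 - j, by omega⟩ := by
  obtain ⟨k, hk⟩ := hf.2 m h1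
  rw [hk ⟨m - 1 - j, by omega⟩]
  apply hf.1 (m + 1)
  have := (succAbove_val_bounds k ⟨m - 1 - j, by omega⟩).2
  simp only [Fin.val_mk] at this
  show (k.succAbove _).val ≤ m - j
  omega

lemma gen_front (f : (m : ℕ) → Fin m → ℚ) (hf : IsPureGen f) (m : ℕ) (h1 : 1 ≤ m) :
    ∀ m', (h : m ≤ m') → ∀ i : Fin m, f m i ≤ f m' ⟨i.val, lt_of_lt_of_le i.isLt h⟩ := by
  intro m' h
  induction m' , h using Nat.le_induction with
  | base => intro i; simp
  | succ n hn ih =>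
    intro i
    refine (ih i).trans ?_
    exact step_front f hf n (by omega) ⟨i.val, by omega⟩

lemma gen_back (f : (m : ℕ) → Fin m → ℚ) (hf : IsPureGen f) (m : ℕ) (h1 : 1 ≤ m)
    (j : ℕ) (hj : j ≤ m - 1) :
    ∀ m', (h : m ≤ m') → f m' ⟨m' - 1 - j, by omega⟩ ≤ f m ⟨m - 1 - j, by omega⟩ := by
  intro m' h
  induction m' , h using Nat.le_induction with
  | base => exact le_refl _
  | succ n hn ih =>
    refine le_trans ?_ ih
    have := step_back f hf n (by omega) j (by omega)
    have e : (⟨n + 1 - 1 - j, by omega⟩ : Fin (n + 1)) = ⟨n - j, by omega⟩ := by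
      simp only [Fin.mk.injEq]; omega
    rw [e]
    exact this

/-- Monotonicity of pure generators (0-based indices): entries counted from the front can only
grow, entries counted from the back can only shrink; in particular the condition
α^m₄ > α^m_{m−2} (0-based: index 3 vs index m−3) propagates to all larger lengths. -/
theorem stmt_4 (f : (m : ℕ) → Fin m → ℚ) (hf : IsPureGen f)
    (m m' : ℕ) (h1 : 1 ≤ m) (h : m ≤ m') :
    (∀ i : Fin m, f m i ≤ f m' ⟨i.val, lt_of_lt_of_le i.isLt h⟩) ∧
    (∀ j : ℕ, j ≤ m - 1 →
      f m' ⟨m' - 1 - j, by omega⟩ ≤ f m ⟨m - 1 - j, by omega⟩) ∧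
    ((h6 : 6 ≤ m) → f m ⟨3, by omega⟩ > f m ⟨m - 3, by omega⟩ →
      ∀ m'' : ℕ, (hm'' : m ≤ m'') →
        f m'' ⟨3, by omega⟩ > f m'' ⟨m'' - 3, by omega⟩) := by
  refine ⟨gen_front f hf m h1 m' h, fun j hj => gen_back f hf m h1 j hj m' h, ?_⟩
  intro h6 hgt m'' hm''
  have hfr := gen_front f hf m h1 m'' hm'' ⟨3, by omega⟩
  have hbk := gen_back f hf m h1 2 (by omega) m'' hm''
  have e1 : (⟨m'' - 1 - 2, by omega⟩ : Fin m'') = ⟨m'' - 3, by omega⟩ := by simp only [Fin.mk.injEq]; omega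
  have e2 : (⟨m - 1 - 2, by omega⟩ : Fin m) = ⟨m - 3, by omega⟩ := by simp only [Fin.mk.injEq]; omega
  rw [e1, e2] at hbk
  calc f m'' ⟨m'' - 3, by omega⟩ ≤ f m ⟨m - 3, by omega⟩ := hbk
    _ < f m ⟨3, by omega⟩ := hgt
    _ ≤ f m'' ⟨3, by omega⟩ := hfr
end

section
/- There is no pure scoring-rule generator g over the integers with the following property: for every odd m ≥ 5, the normalization of g(m) equals the vector whose consecutive gaps (differences of adjacent entries) from the top are 1, 2, 4, …, 2^{(m−3)/2}, 2^{(m−3)/2}, …, 4, 2, 1. Equivalently: no sequence of nonincreasing integer vectors (β^m)_{m≥1}, where each β^m arises from β^{m−1} by inserting one entry, satisfies that for every odd m ≥ 5 the vector β^m is a positive affine transformation of the scoring vector with gap pattern 1,2,…,2^{(m−3)/2},2^{(m−3)/2},…,2,1. -/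
open Finset


/-- A pure scoring-rule generator over ℤ. -/
def IsPureGenZ (f : (m : ℕ) → Fin m → ℤ) : Prop :=
  (∀ m, Antitone (f m)) ∧
  ∀ m : ℕ, 1 ≤ m → ∃ j : Fin (m + 1), ∀ i : Fin m, f m i = f (m + 1) (j.succAbove i)

/-- The nonincreasing integer vector of length m whose consecutive gaps (from the top) are
1, 2, 4, …, 2^{(m−3)/2}, 2^{(m−3)/2}, …, 4, 2, 1 (for odd m ≥ 5), with last entry 0. -/
def gapVec (m : ℕ) (i : Fin m) : ℤ :=
  ∑ j ∈ Finset.Ico i.val (m - 1), (2 : ℤ) ^ (min (j + 1) (m - 1 - j) - 1)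

lemma geom2 (n : ℕ) : ∑ i ∈ range n, (2:ℤ)^i = 2^n - 1 := by
  have := geom_sum_mul (2:ℤ) n; simpa using this

lemma sumpow_le (i j c : ℕ) (h : j ≤ c+1) :
    ∑ l ∈ Ico i j, (2:ℤ)^(c-l) ≤ 2^(c+1-i) - 1 := by
  rcases le_or_gt j i with hij | hij
  · rw [Ico_eq_empty (by omega)]
    have : (0:ℤ) ≤ 2^(c+1-i) - 1 := by
      have : (1:ℤ) ≤ 2^(c+1-i) := one_le_pow₀ (by norm_num)
      linarith
    simpa using this
  · have hic : i ≤ c := by omega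
    calc ∑ l ∈ Ico i j, (2:ℤ)^(c-l) ≤ ∑ l ∈ Ico i (c+1), (2:ℤ)^(c-l) := by
          apply sum_le_sum_of_subset_of_nonneg (Ico_subset_Ico le_rfl h)
          intros; positivity
      _ = ∑ k ∈ range (c+1-i), (2:ℤ)^(c-(i+k)) := by
          rw [Finset.sum_Ico_eq_sum_range]
      _ = ∑ k ∈ range (c+1-i), (2:ℤ)^((c+1-i)-1-k) := by
          apply sum_congr rfl; intro k hk; simp only [mem_range] at hk
          congr 1; omega
      _ = ∑ k ∈ range (c+1-i), (2:ℤ)^k := Finset.sum_range_reflect (fun k => (2:ℤ)^k) _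
      _ = 2^(c+1-i) - 1 := geom2 _

lemma embedPG (g : (m : ℕ) → Fin m → ℤ) (hg : IsPureGenZ g) (m : ℕ) (hm : 1 ≤ m) :
    ∀ n, m ≤ n → ∃ ι : Fin m → Fin n, StrictMono ι ∧ ∀ i, g m i = g n (ι i) := by
  intro n
  induction n with
  | zero => intro h; omega
  | succ n ih =>
    intro hmn
    rcases Nat.lt_or_ge n m with h | h
    · have : m = n+1 := by omega
      subst this; exact ⟨id, strictMono_id, fun i => rfl⟩
    · obtain ⟨ι, hmono, hval⟩ := ih h
      obtain ⟨j, hj⟩ := hg.2 n (by omega)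
      exact ⟨fun i => j.succAbove (ι i), (Fin.strictMono_succAbove j).comp hmono,
        fun i => (hval i).trans (hj (ι i))⟩


def c0 : Fin 5 := ⟨0, by norm_num⟩
def c1 : Fin 5 := ⟨1, by norm_num⟩
def c2 : Fin 5 := ⟨2, by norm_num⟩
def c3 : Fin 5 := ⟨3, by norm_num⟩
def c4 : Fin 5 := ⟨4, by norm_num⟩

lemma hc01 : c0 < c1 := by decide
lemma hc12 : c1 < c2 := by decide
lemma hc23 : c2 < c3 := by decide
lemma hc34 : c3 < c4 := by decide

lemma gap01 : gapVec 5 c0 - gapVec 5 c1 = 1 := by decide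
lemma gap12 : gapVec 5 c1 - gapVec 5 c2 = 2 := by decide
lemma gap23 : gapVec 5 c2 - gapVec 5 c3 = 2 := by decide
lemma gap34 : gapVec 5 c3 - gapVec 5 c4 = 1 := by decide

set_option maxHeartbeats 1000000 in
/-- No pure generator over the integers produces, at every odd length m ≥ 5, a vector that is
a positive affine transformation of `gapVec m` (i.e., normalizes to it). -/
theorem stmt_6 :
    ¬ ∃ g : (m : ℕ) → Fin m → ℤ, IsPureGenZ g ∧
      ∀ m : ℕ, Odd m → 5 ≤ m →
        ∃ a b : ℚ, 0 < a ∧ ∀ i : Fin m, (g m i : ℚ) = a * (gapVec m i : ℚ) + b := by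
  rintro ⟨g, hpure, hnorm⟩
  obtain ⟨a, b, ha, h5⟩ := hnorm 5 ⟨2, by norm_num⟩ (by norm_num)
  set A : ℤ := g 5 c0 - g 5 c1 with hAdef
  have hAa : (A:ℚ) = a := by
    have hv := gap01
    have hv' : ((gapVec 5 c0 : ℤ) : ℚ) - ((gapVec 5 c1 : ℤ) : ℚ) = 1 := by exact_mod_cast hv
    have e0 := h5 c0; have e1 := h5 c1
    push_cast [hAdef]
    linear_combination e0 - e1 + a * hv'
  have hA : 0 < A := by exact_mod_cast hAa ▸ ha
  set K : ℕ := (6*A).toNat with hKdef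
  have hK1 : (6*A : ℤ) < 2^(K+1) := by
    have h1 : ((6*A).toNat : ℤ) < (2:ℤ)^K := by exact_mod_cast Nat.lt_two_pow_self (n := (6*A).toNat)
    have h2 : ((6*A).toNat : ℤ) = 6*A := Int.toNat_of_nonneg (by linarith)
    have h3 : (2:ℤ)^K ≤ 2^(K+1) := by
      apply pow_le_pow_right₀ (by norm_num); omega
    rw [h2] at h1; linarith
  have hKge : 6 ≤ K := by omega
  set M : ℕ := 2*K+3 with hMdef
  obtain ⟨a', b', ha', hM⟩ := hnorm M (Nat.odd_iff.mpr (by omega)) (by omega)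
  set w : ℕ → ℤ := fun l => (2:ℤ)^(min (l+1) (M-1-l) - 1) with hwdef
  have hgv : ∀ i : Fin M, gapVec M i = ∑ l ∈ Ico i.val (M-1), w l := fun i => rfl
  have hdiff : ∀ p q : Fin M, p.val ≤ q.val →
      gapVec M p - gapVec M q = ∑ l ∈ Ico p.val q.val, w l := by
    intro p q hpq
    have h2 : q.val ≤ M-1 := by have := q.isLt; omega
    have := Finset.sum_Ico_consecutive w hpq h2
    rw [hgv p, hgv q]; linarith
  -- A' and its cast
  set j0 : Fin M := ⟨0, by omega⟩ with hj0
  set j1 : Fin M := ⟨1, by omega⟩ with hj1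
  set A' : ℤ := g M j0 - g M j1 with hA'def
  have hA'a : (A':ℚ) = a' := by
    have hd : gapVec M j0 - gapVec M j1 = 1 := by
      rw [hdiff j0 j1 (by simp [hj0, hj1])]
      have hv01 : (j0 : ℕ) = 0 ∧ (j1 : ℕ) = 1 := by simp [hj0, hj1]; exact Nat.mod_eq_of_lt (by omega)
      rw [hv01.1, hv01.2, ← range_eq_Ico, Finset.sum_range_one, hwdef]
      have hexp : min (0+1) (M-1-0) - 1 = 0 := by omega
      simp only [hexp, pow_zero]
    have hv' : ((gapVec M j0 : ℤ) : ℚ) - ((gapVec M j1 : ℤ) : ℚ) = 1 := by exact_mod_cast hd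
    have e0 := hM j0; have e1 := hM j1
    push_cast [hA'def]
    linear_combination e0 - e1 + a' * hv'
  have hA' : 0 < A' := by exact_mod_cast hA'a ▸ ha'
  -- embedding
  obtain ⟨ι, hmono, hval⟩ := embedPG g hpure 5 (by norm_num) M (by omega)
  -- gap equations
  have hgapEq : ∀ p q : Fin 5, p < q → ∀ d : ℤ, gapVec 5 p - gapVec 5 q = d →
      A * d = A' * (∑ l ∈ Ico (ι p).val (ι q).val, w l) := by
    intro p q hpq d hd
    have hlt : (ι p).val < (ι q).val := hmono hpq
    have hS := hdiff (ι p) (ι q) (le_of_lt hlt)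
    have hSQ : ((gapVec M (ι p) : ℤ) : ℚ) - ((gapVec M (ι q) : ℤ) : ℚ)
        = ((∑ l ∈ Ico (ι p).val (ι q).val, w l : ℤ) : ℚ) := by exact_mod_cast hS
    have hdQ : ((gapVec 5 p : ℤ) : ℚ) - ((gapVec 5 q : ℤ) : ℚ) = ((d:ℤ):ℚ) := by
      exact_mod_cast hd
    have e5p := h5 p; have e5q := h5 q
    have eMp := hM (ι p); have eMq := hM (ι q)
    have hvp : ((g 5 p : ℤ):ℚ) = ((g M (ι p) : ℤ):ℚ) := by exact_mod_cast hval p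
    have hvq : ((g 5 q : ℤ):ℚ) = ((g M (ι q) : ℤ):ℚ) := by exact_mod_cast hval q
    have key : (A:ℚ) * ((d:ℤ):ℚ) = (A':ℚ) * ((∑ l ∈ Ico (ι p).val (ι q).val, w l : ℤ) : ℚ) := by
      rw [hAa, hA'a]
      linear_combination -(a * hdQ) - e5p + e5q + hvp - hvq + eMp - eMq + a' * hSQ
    exact_mod_cast key
  set x0 : ℕ := (ι c0).val with hx0
  set x1 : ℕ := (ι c1).val with hx1
  set x2 : ℕ := (ι c2).val with hx2
  set x3 : ℕ := (ι c3).val with hx3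
  set x4 : ℕ := (ι c4).val with hx4
  have h01 : x0 < x1 := hmono hc01
  have h12 : x1 < x2 := hmono hc12
  have h23 : x2 < x3 := hmono hc23
  have h34 : x3 < x4 := hmono hc34
  have hx4M : x4 < M := (ι c4).isLt
  set S01 : ℤ := ∑ l ∈ Ico x0 x1, w l with hS01
  set S12 : ℤ := ∑ l ∈ Ico x1 x2, w l with hS12
  set S23 : ℤ := ∑ l ∈ Ico x2 x3, w l with hS23
  set S34 : ℤ := ∑ l ∈ Ico x3 x4, w l with hS34
  have e1 : A * 1 = A' * S01 := hgapEq c0 c1 hc01 1 gap01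
  have e2 : A * 2 = A' * S12 := hgapEq c1 c2 hc12 2 gap12
  have e3 : A * 2 = A' * S23 := hgapEq c2 c3 hc23 2 gap23
  have e4 : A * 1 = A' * S34 := hgapEq c3 c4 hc34 1 gap34
  have hS01pos : 0 < S01 := by nlinarith
  have heq34 : S34 = S01 := by
    have : A' * S01 = A' * S34 := by linarith
    exact (mul_left_cancel₀ (ne_of_gt hA') this).symm
  have heq12 : S12 = 2 * S01 := by
    have : A' * S12 = A' * (2 * S01) := by ring_nf; nlinarith [e1, e2]
    exact mul_left_cancel₀ (ne_of_gt hA') this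
  have heq23 : S23 = 2 * S01 := by
    have : A' * S23 = A' * (2 * S01) := by ring_nf; nlinarith [e1, e3]
    exact mul_left_cancel₀ (ne_of_gt hA') this
  have hS01A : S01 ≤ A := by nlinarith
  -- case analysis
  rcases le_or_gt x4 (K+1) with hc1 | hc1
  · -- left zone
    have hw2 : ∀ l, l < x4 → w l = 2^l := by
      intro l hl; simp only [hwdef]; congr 1; omega
    have hlow : (2:ℤ)^x3 ≤ S34 := by
      rw [hS34]
      have hmem : x3 ∈ Ico x3 x4 := by simp; omega
      have := single_le_sum (f := w) (fun l _ => by simp only [hwdef]; positivity) hmem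
      rw [hw2 x3 (by omega)] at this; exact this
    have hup : S01 ≤ 2^x1 - 1 := by
      rw [hS01]
      calc ∑ l ∈ Ico x0 x1, w l = ∑ l ∈ Ico x0 x1, (2:ℤ)^l := by
            apply sum_congr rfl; intro l hl; simp only [mem_Ico] at hl
            exact hw2 l (by omega)
        _ ≤ ∑ l ∈ Ico 0 x1, (2:ℤ)^l := by
            apply sum_le_sum_of_subset_of_nonneg (Ico_subset_Ico (by omega) le_rfl)
            intros; positivity
        _ = 2^x1 - 1 := by rw [← range_eq_Ico]; exact geom2 _
    have hp : (2:ℤ)^x1 ≤ 2^x3 := pow_le_pow_right₀ (by norm_num) (by omega)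
    linarith
  rcases le_or_gt (K+1) x0 with hc2 | hc2
  · -- right zone
    have hw2 : ∀ l, x0 ≤ l → l < x4 → w l = 2^(2*K+1-l) := by
      intro l hl1 hl2; simp only [hwdef]; congr 1; omega
    have hlow : (2:ℤ)^(2*K+2-x1) ≤ S01 := by
      rw [hS01]
      have hmem : x1 - 1 ∈ Ico x0 x1 := by simp; omega
      have := single_le_sum (f := w) (fun l _ => by simp only [hwdef]; positivity) hmem
      rw [hw2 (x1-1) (by omega) (by omega)] at this
      have hexp : 2*K+1-(x1-1) = 2*K+2-x1 := by omega
      rw [hexp] at this; exact this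
    have hup : S34 ≤ 2^(2*K+2-x3) - 1 := by
      rw [hS34]
      calc ∑ l ∈ Ico x3 x4, w l = ∑ l ∈ Ico x3 x4, (2:ℤ)^(2*K+1-l) := by
            apply sum_congr rfl; intro l hl; simp only [mem_Ico] at hl
            exact hw2 l (by omega) (by omega)
        _ ≤ 2^(2*K+1+1-x3) - 1 := sumpow_le x3 x4 (2*K+1) (by omega)
        _ = 2^(2*K+2-x3) - 1 := by norm_num
    have hp : (2:ℤ)^(2*K+2-x3) ≤ 2^(2*K+2-x1) := pow_le_pow_right₀ (by norm_num) (by omega)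
    linarith
  · -- straddle
    have hwK : w K = 2^K := by simp only [hwdef]; congr 1; omega
    have hwK1 : w (K+1) = 2^K := by simp only [hwdef]; congr 1; omega
    have htot : S01 + S12 + S23 + S34 = ∑ l ∈ Ico x0 x4, w l := by
      rw [hS01, hS12, hS23, hS34,
        Finset.sum_Ico_consecutive w (le_of_lt h01) (by omega),
        Finset.sum_Ico_consecutive w (le_of_lt (lt_trans h01 h12)) (by omega),
        Finset.sum_Ico_consecutive w (by omega) (by omega)]
    have hmid : (2:ℤ)^K + 2^K ≤ ∑ l ∈ Ico x0 x4, w l := by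
      have hsub : Ico K (K+2) ⊆ Ico x0 x4 := Ico_subset_Ico (by omega) (by omega)
      have hpair : ∑ l ∈ Ico K (K+2), w l = 2^K + 2^K := by
        rw [Finset.sum_Ico_succ_top (by omega), Finset.sum_Ico_succ_top (by omega)]
        simp [hwK, hwK1]
      calc (2:ℤ)^K + 2^K = ∑ l ∈ Ico K (K+2), w l := hpair.symm
        _ ≤ ∑ l ∈ Ico x0 x4, w l := by
            apply sum_le_sum_of_subset_of_nonneg hsub
            intros; simp only [hwdef]; positivity
    have hfin : (2:ℤ)^(K+1) ≤ 6 * A := by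
      have h2K : (2:ℤ)^(K+1) = 2^K + 2^K := by rw [pow_succ]; ring
      have : 2^K + (2:ℤ)^K ≤ 6 * S01 := by linarith
      linarith
    linarith
end

section
/- Let (α_m)_{m≥1} be any family of coefficients occurring in a pure scoring rule over the naturals, let Pool be the (finite or infinite) set of all coefficients occurring, and assume |Pool| ≥ 2 with minimum k and let j = gcd of {a − k : a ∈ Pool, a ≠ k}. Then the generator obtained by replacing each coefficient a with (a − k)/j is still a pure generator over ℕ equivalent to the original at every length, and there is an M such that for all m ≥ M, the modified length-m vector has last entry 0 and the gcd of its nonzero entries is 1. -/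
/-- A pure scoring-rule generator over ℕ. -/
def IsPureGenN (f : (m : ℕ) → Fin m → ℕ) : Prop :=
  (∀ m, Antitone (f m)) ∧
  ∀ m : ℕ, 1 ≤ m → ∃ j : Fin (m + 1), ∀ i : Fin m, f m i = f (m + 1) (j.succAbove i)

/-- Given a pure generator f over ℕ whose pool of coefficients has at least two elements,
with minimum k and with j the gcd of {a − k : a ∈ Pool}, the generator g with
g m i = (f m i − k)/j is a pure generator over ℕ, equivalent (a positive affine transformation,
f = j·g + k) to f at every length, and for all sufficiently large m its length-m vector has
last entry 0 and gcd of its (nonzero) entries equal to 1. -/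
theorem stmt_9 (f : (m : ℕ) → Fin m → ℕ) (hf : IsPureGenN f)
    (Pool : Set ℕ) (hPool : Pool = {a | ∃ (m : ℕ) (i : Fin m), f m i = a})
    (k : ℕ) (hk : k ∈ Pool) (hkmin : ∀ a ∈ Pool, k ≤ a)
    (htwo : ∃ a ∈ Pool, a ≠ k)
    (j : ℕ) (hjdvd : ∀ a ∈ Pool, j ∣ (a - k))
    (hjmax : ∀ d : ℕ, (∀ a ∈ Pool, d ∣ (a - k)) → d ∣ j)
    (g : (m : ℕ) → Fin m → ℕ) (hg : ∀ (m : ℕ) (i : Fin m), g m i = (f m i - k) / j) :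
    IsPureGenN g ∧
    (∀ (m : ℕ) (i : Fin m), (f m i : ℚ) = (j : ℚ) * (g m i : ℚ) + (k : ℚ)) ∧
    ∃ M : ℕ, ∀ m : ℕ, (hM : M ≤ m) → (hm : 1 ≤ m) →
      g m ⟨m - 1, by omega⟩ = 0 ∧ Finset.univ.gcd (g m) = 1 := by
  obtain ⟨hanti, hins⟩ := hf
  have hmem : ∀ m (i : Fin m), f m i ∈ Pool := by
    subst hPool; exact fun m i => ⟨m, i, rfl⟩
  have hkle : ∀ m (i : Fin m), k ≤ f m i := fun m i => hkmin _ (hmem m i)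
  have hjd : ∀ m (i : Fin m), j ∣ f m i - k := fun m i => hjdvd _ (hmem m i)
  obtain ⟨a, haP, hane⟩ := htwo
  have hak : k < a := lt_of_le_of_ne (hkmin a haP) (Ne.symm hane)
  have hj0 : 0 < j := by
    rcases Nat.eq_zero_or_pos j with h | h
    · have h2 := hjdvd a haP
      rw [h] at h2
      omega
    · exact h
  -- f = j * g + k over ℕ
  have hfg : ∀ m (i : Fin m), f m i = j * g m i + k := by
    intro m i
    rw [hg]
    have h1 : j * ((f m i - k) / j) = f m i - k := Nat.mul_div_cancel' (hjd m i)
    have h2 := hkle m i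
    omega
  -- propagation: every value at length m occurs at every length m' ≥ m
  have hprop : ∀ m m', m ≤ m' → ∀ i : Fin m, ∃ i' : Fin m', f m i = f m' i' := by
    intro m m' h
    induction m' with
    | zero => intro i; exact absurd i.isLt (by omega)
    | succ n ih =>
      intro i
      rcases Nat.lt_or_ge n m with h1 | h1
      · have hm : m = n + 1 := by omega
        subst hm
        exact ⟨i, rfl⟩
      · obtain ⟨i', hi'⟩ := ih h1 i
        have hn : 1 ≤ n := i'.pos
        obtain ⟨jj, hjj⟩ := hins n hn
        exact ⟨jj.succAbove i', by rw [hi', hjj i']⟩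
  -- k occurs at some length
  obtain ⟨m0, i0, hi0⟩ : ∃ (m : ℕ) (i : Fin m), f m i = k := by
    rw [hPool] at hk; exact hk
  -- the gcd sequence
  set D : ℕ → ℕ := fun m => Finset.univ.gcd (fun i : Fin m => f m i - k) with hD
  have hDdvd : ∀ m (i : Fin m), D m ∣ f m i - k := by
    intro m i
    exact Finset.gcd_dvd (Finset.mem_univ i)
  have hchain : ∀ m m', m ≤ m' → D m' ∣ D m := by
    intro m m' h
    apply Finset.dvd_gcd
    intro i _
    obtain ⟨i', hi'⟩ := hprop m m' h i
    rw [hi']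
    exact hDdvd m' i'
  have hjD : ∀ m, j ∣ D m := by
    intro m
    exact Finset.dvd_gcd fun i _ => hjd m i
  -- a occurs at m1, making D m positive for m ≥ m1
  obtain ⟨m1, i1, hi1⟩ : ∃ (m : ℕ) (i : Fin m), f m i = a := by
    rw [hPool] at haP; exact haP
  have hDpos : ∀ m, m1 ≤ m → 0 < D m := by
    intro m hm
    obtain ⟨i', hi'⟩ := hprop m1 m hm i1
    have h1 : D m ∣ a - k := by
      have := hDdvd m i'
      rwa [← hi', hi1] at this
    rcases Nat.eq_zero_or_pos (D m) with h | h
    · rw [h] at h1; omega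
    · exact h
  -- stabilization of D
  obtain ⟨t, ht⟩ : ∃ t, D (m1 + t) = sInf (Set.range fun t => D (m1 + t)) :=
    Nat.sInf_mem (s := Set.range fun t => D (m1 + t)) ⟨D m1, 0, by simp⟩
  set m2 := m1 + t with hm2
  have hstab : ∀ m, m2 ≤ m → D m = D m2 := by
    intro m hm
    have h1 : D m ∣ D m2 := hchain m2 m hm
    have h2 : D m2 ≤ D m := by
      have : D m ∈ Set.range fun t => D (m1 + t) := ⟨m - m1, by
        show D (m1 + (m - m1)) = D m
        congr 1
        omega⟩
      rw [ht]
      exact Nat.sInf_le this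
    have h3 : 0 < D m2 := hDpos m2 (by omega)
    exact Nat.dvd_antisymm h1 (by
      have := Nat.le_of_dvd h3 h1
      exact (Nat.eq_iff_le_and_ge.mpr ⟨h2, this⟩) ▸ dvd_refl _)
  -- D m2 = j
  have hDj : D m2 = j := by
    have h1 : D m2 ∣ j := by
      apply hjmax
      intro a' ha'
      rw [hPool] at ha'
      obtain ⟨m, i, hi⟩ := ha'
      obtain ⟨i', hi'⟩ := hprop m (max m m2) (le_max_left _ _) i
      have h2 := hDdvd (max m m2) i'
      rw [← hi', hi] at h2
      rw [← hstab (max m m2) (le_max_right _ _)]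
      exact h2
    exact Nat.dvd_antisymm h1 (hjD m2)
  refine ⟨⟨?_, ?_⟩, ?_, ?_⟩
  · -- Antitone g
    intro m i i' hii
    rw [hg, hg]
    exact Nat.div_le_div_right (Nat.sub_le_sub_right (hanti m hii) k)
  · -- insertion for g
    intro m hm
    obtain ⟨jj, hjj⟩ := hins m hm
    exact ⟨jj, fun i => by rw [hg, hg, hjj i]⟩
  · -- rational affine relation
    intro m i
    have := hfg m i
    push_cast [this]
    ring
  · -- the eventual statement
    refine ⟨max m0 m2, fun m hM hm => ?_⟩
    have hm0 : m0 ≤ m := le_trans (le_max_left _ _) hM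
    have hm2' : m2 ≤ m := le_trans (le_max_right _ _) hM
    constructor
    · -- last entry is zero
      obtain ⟨i', hi'⟩ := hprop m0 m hm0 i0
      have hlast : f m ⟨m - 1, by omega⟩ = k := by
        have h1 : f m ⟨m - 1, by omega⟩ ≤ f m i' := by
          apply hanti m
          show (i' : ℕ) ≤ m - 1
          have := i'.isLt
          omega
        rw [← hi', hi0] at h1
        have h2 := hkle m ⟨m - 1, by omega⟩
        omega
      rw [hg, hlast]
      simp
    · -- gcd is 1
      have hDm : D m = j := by rw [hstab m hm2', hDj]
      have hgcd : (Finset.univ.gcd fun i : Fin m => j * g m i) = D m := by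
        apply Finset.gcd_congr rfl
        intro i _
        have := hfg m i
        omega
      rw [Finset.gcd_mul_left] at hgcd
      rw [normalize_eq, hDm] at hgcd
      exact Nat.eq_of_mul_eq_mul_left hj0 (by rw [hgcd, mul_one])
end

section
/- Let m ≥ 2, let (α₁,…,α_m) be a scoring vector, and let i ≠ j and k ≠ l be indices in {1,…,m}. Then there exists a multiset V of exactly m votes (linear orders of m candidates c₁,…,c_m) such that, with A = α₁ + α₂ + … + α_m, every candidate's total score from V equals A, except that candidate c_i has score A + α_k − α_l and candidate c_j has score A + α_l − α_k. -/
/-- There is a multiset of exactly m votes giving every candidate score A = Σ α, except that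
candidate i gets A + α_k − α_l and candidate j gets A + α_l − α_k. -/
theorem stmt_10 (m : ℕ) (hm : 2 ≤ m) (α : Fin m → ℚ)
    (i j k l : Fin m) (hij : i ≠ j) (hkl : k ≠ l) :
    ∃ V : Multiset (Equiv.Perm (Fin m)),
      Multiset.card V = m ∧
      ∀ c : Fin m,
        score α V c =
          if c = i then (∑ t, α t) + α k - α l
          else if c = j then (∑ t, α t) + α l - α k
          else (∑ t, α t) := by
  haveI : NeZero m := ⟨by omega⟩
  -- a permutation sending i to l and j to k
  set g : Equiv.Perm (Fin m) :=
    (Equiv.swap i l).trans (Equiv.swap ((Equiv.swap i l) j) k) with hg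
  have hgi : g i = l := by
    have h1 : (Equiv.swap i l) j ≠ l := by
      intro h
      have h2 : (Equiv.swap i l) j = (Equiv.swap i l) i := by
        rw [h, Equiv.swap_apply_left]
      exact hij ((Equiv.swap i l).injective h2).symm
    rw [hg]
    simp only [Equiv.trans_apply, Equiv.swap_apply_left]
    exact Equiv.swap_apply_of_ne_of_ne (Ne.symm h1) hkl.symm
  have hgj : g j = k := by simp [hg]
  -- votes: p t is the map candidate ↦ position in vote t
  set p : Fin m → Equiv.Perm (Fin m) := fun t =>
    ((if t = 0 then (Equiv.swap i j).trans g else g).trans (Equiv.addRight t)) with hp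
  refine ⟨Finset.univ.val.map (fun t => (p t).symm), by simp, ?_⟩
  have key : ∀ x : Fin m, ∑ t : Fin m, α (x + t) = ∑ t, α t := by
    intro x
    exact Fintype.sum_bijective (fun t => x + t) (Equiv.addLeft x).bijective _ _
      (fun t => rfl)
  intro c
  have hscore : score α (Finset.univ.val.map fun t => (p t).symm) c
      = ∑ t : Fin m, α (p t c) := by
    rw [score, Multiset.map_map]
    rfl
  rw [hscore]
  have pne : ∀ t : Fin m, t ≠ 0 → ∀ d, p t d = g d + t := by
    intro t ht d
    simp [hp, ht, Equiv.trans_apply]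
  have p0 : ∀ d, p 0 d = g ((Equiv.swap i j) d) := by
    intro d
    simp [hp, Equiv.trans_apply]
  have split0 : ∀ x : Fin m, ∀ y : ℚ,
      (∀ t : Fin m, t ≠ 0 → α (p t c) = α (x + t)) → α (p 0 c) = y →
      ∑ t : Fin m, α (p t c) = y + ((∑ t, α t) - α x) := by
    intro x y hrest h0
    rw [← Finset.add_sum_erase _ _ (Finset.mem_univ (0 : Fin m)), h0]
    congr 1
    have : ∑ t ∈ Finset.univ.erase (0 : Fin m), α (p t c)
        = ∑ t ∈ Finset.univ.erase (0 : Fin m), α (x + t) := by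
      apply Finset.sum_congr rfl
      intro t ht
      exact hrest t (Finset.ne_of_mem_erase ht)
    rw [this]
    have h2 := Finset.add_sum_erase Finset.univ (fun t => α (x + t))
      (Finset.mem_univ (0 : Fin m))
    rw [← key x, ← h2]
    simp
  by_cases hci : c = i
  · subst hci
    have := split0 l (α k)
      (fun t ht => by rw [pne t ht, hgi])
      (by rw [p0, Equiv.swap_apply_left, hgj])
    rw [this, if_pos rfl]; ring
  · by_cases hcj : c = j
    · subst hcj
      have := split0 k (α l)
        (fun t ht => by rw [pne t ht, hgj])
        (by rw [p0, Equiv.swap_apply_right, hgi])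
      rw [this, if_neg hci, if_pos rfl]; ring
    · have := split0 (g c) (α (g c + 0))
        (fun t ht => by rw [pne t ht])
        (by rw [p0, Equiv.swap_apply_of_ne_of_ne hci hcj]; simp)
      rw [this, if_neg hci, if_neg hcj]; simp
end
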